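/- For any fixed $p, p' \in \mathcal{P}$ with $p' \neq -p$, the number of admissible mirrors $\pi$ on $\mathcal{P}$ with $\pi(p) = p'$ equals $(2d-3)!!$ (with the convention $(-1)!! = 1$), i.e. equals $(2d-1)!!/(2d-1)$. Consequently, under the uniform probability measure on the set of admissible mirrors, the probability of the event $\{\pi(p) = p'\}$ equals $1/(2d-1)$ for every $p'\neq -p$, and equals $0$ for $p' = -p$. -/
import Mathlib



/-- Fixed-point-free involutions on `α`, as functions. -/
def FPFun (α : Type*) : Type _ := {f : α → α // (∀ x, f (f x) = x) ∧ ∀ x, f x ≠ x}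

instance (α : Type*) [Fintype α] [DecidableEq α] : Fintype (FPFun α) :=
  inferInstanceAs (Fintype {f : α → α // (∀ x, f (f x) = x) ∧ ∀ x, f x ≠ x})

variable {α : Type*} [DecidableEq α]

/-- Pinning `f a = b` reduces to a fpf involution on the complement of `{a,b}`. -/
def pinEquiv (a b : α) (hab : a ≠ b) :
    {f : FPFun α // f.1 a = b} ≃ FPFun {x : α // x ≠ a ∧ x ≠ b} where
  toFun f := by
    refine ⟨fun x => ⟨f.1.1 x.1, ?_, ?_⟩, ?_, ?_⟩
    · intro h
      have h2 := congrArg f.1.1 h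
      rw [f.1.2.1] at h2
      exact x.2.2 (h2.trans f.2)
    · intro h
      have h2 := congrArg f.1.1 h
      rw [f.1.2.1] at h2
      have h3 := congrArg f.1.1 f.2
      rw [f.1.2.1] at h3
      exact x.2.1 (h2.trans h3.symm)
    · intro x; exact Subtype.ext (f.1.2.1 x.1)
    · intro x h; exact f.1.2.2 x.1 (congrArg Subtype.val h)
  invFun g := by
    refine ⟨⟨fun x => if hx : x = a then b else if hx' : x = b then a
      else (g.1 ⟨x, hx, hx'⟩).1, ?_, ?_⟩, ?_⟩
    · intro x
      by_cases hx : x = a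
      · subst hx; simp [hab.symm, hab]
      · by_cases hx' : x = b
        · subst hx'; simp [hab]
        · simp only [hx, hx', dif_neg, not_false_iff]
          have h1 := (g.1 ⟨x, hx, hx'⟩).2.1
          have h2 := (g.1 ⟨x, hx, hx'⟩).2.2
          simp only [h1, h2, dif_neg, not_false_iff]
          exact congrArg Subtype.val (g.2.1 ⟨x, hx, hx'⟩)
    · intro x
      by_cases hx : x = a
      · subst hx; simpa [hab] using hab.symm
      · by_cases hx' : x = b
        · subst hx'; simpa [hab] using hx
        · simp only [hx, hx', dif_neg, not_false_iff]
          intro h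
          exact g.2.2 ⟨x, hx, hx'⟩ (Subtype.ext h)
    · simp [hab]
  left_inv f := by
    apply Subtype.ext; apply Subtype.ext
    funext x
    by_cases hx : x = a
    · simp only [dif_pos hx]
      subst hx; exact f.2.symm
    · by_cases hx' : x = b
      · simp only [dif_neg hx, dif_pos hx']
        subst hx'
        have h3 := congrArg f.1.1 f.2
        rw [f.1.2.1] at h3
        exact h3
      · simp only [dif_neg hx, dif_neg hx']
  right_inv g := by
    apply Subtype.ext
    funext x
    apply Subtype.ext
    simp [x.2.1, x.2.2]

theorem card_compl_pair [Fintype α] (a b : α) (hab : a ≠ b) :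
    Fintype.card {x : α // x ≠ a ∧ x ≠ b} = Fintype.card α - 2 := by
  rw [Fintype.card_subtype]
  have h : (Finset.univ.filter fun x : α => x ≠ a ∧ x ≠ b) = Finset.univ \ {a, b} := by
    ext x; simp [not_or]
  rw [h, Finset.card_sdiff_of_subset (by simp)]
  simp [Finset.card_pair hab]

theorem card_FPFun : ∀ (m : ℕ) (α : Type) [Fintype α] [DecidableEq α],
    Fintype.card α = 2 * m →
    Nat.card (FPFun α) = Nat.doubleFactorial (2 * m - 1) := by
  intro m
  induction m with
  | zero =>
    intro α _ _ hcard
    have he : IsEmpty α := Fintype.card_eq_zero_iff.mp (by omega)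
    have hne : Nonempty (FPFun α) := ⟨⟨fun x => x, fun x => (he.false x).elim,
      fun x => (he.false x).elim⟩⟩
    have hsub : Subsingleton (FPFun α) := ⟨fun f g => Subtype.ext (funext fun x =>
      (he.false x).elim)⟩
    rw [Nat.card_eq_one_iff_unique.mpr ⟨hsub, hne⟩]
    rfl
  | succ m ih =>
    intro α _ _ hcard
    have hpos : 0 < Fintype.card α := by omega
    obtain ⟨a⟩ := Fintype.card_pos_iff.mp hpos
    rw [Nat.card_congr (Equiv.sigmaFiberEquiv fun f : FPFun α => f.1 a).symm,
      Nat.card_eq_fintype_card, Fintype.card_sigma]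
    have hterm : ∀ b : α, b ≠ a →
        Fintype.card {f : FPFun α // f.1 a = b} = Nat.doubleFactorial (2 * m - 1) := by
      intro b hb
      rw [← Nat.card_eq_fintype_card, Nat.card_congr (pinEquiv a b (Ne.symm hb))]
      exact ih {x : α // x ≠ a ∧ x ≠ b} (by rw [card_compl_pair a b (Ne.symm hb)]; omega)
    have ha : Fintype.card {f : FPFun α // f.1 a = a} = 0 := by
      rw [Fintype.card_eq_zero_iff]
      exact ⟨fun f => f.1.2.2 a f.2⟩
    rw [← Finset.sum_erase_add _ _ (Finset.mem_univ a), ha, add_zero,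
      Finset.sum_congr rfl fun b hb => hterm b (Finset.ne_of_mem_erase hb),
      Finset.sum_const, Finset.card_erase_of_mem (Finset.mem_univ a), Finset.card_univ,
      hcard]
    simp only [smul_eq_mul]
    rcases Nat.eq_zero_or_pos m with hm | hm
    · subst hm; rfl
    · have h1 : 2 * (m + 1) - 1 = (2 * m - 1) + 2 := by omega
      rw [h1, Nat.doubleFactorial_add_two]

theorem card_FPFun_pinned (m : ℕ) (hm : 1 ≤ m) (α : Type) [Fintype α] [DecidableEq α]
    (hcard : Fintype.card α = 2 * m) (a b : α) (hab : a ≠ b) :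
    Nat.card {f : FPFun α // f.1 a = b} = Nat.doubleFactorial (2 * m - 3) := by
  rw [Nat.card_congr (pinEquiv a b hab),
    card_FPFun (m - 1) _ (by rw [card_compl_pair a b hab]; omega)]
  congr 1; omega



/-- The velocity set `𝒫 = {±e₁, …, ±e_d} ⊆ ℤ^d`. -/
def velocitySet (d : ℕ) : Finset (Fin d → ℤ) :=
  (Finset.univ.image fun i : Fin d => Pi.single i (1 : ℤ)) ∪
    (Finset.univ.image fun i : Fin d => -Pi.single i (1 : ℤ))

/-- An admissible mirror: a bijection `π` of `𝒫` satisfying the reversibility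
condition `π(-π(p)) = -p` (phrased via the element `q ∈ 𝒫` with `q = -π(p)`)
and the no-U-turn condition `π(p) ≠ -p`. -/
def IsAdmissibleMirror {d : ℕ}
    (π : {v // v ∈ velocitySet d} ≃ {v // v ∈ velocitySet d}) : Prop :=
  (∀ p q : {v // v ∈ velocitySet d},
      (q : Fin d → ℤ) = -(π p : Fin d → ℤ) → (π q : Fin d → ℤ) = -(p : Fin d → ℤ)) ∧
    ∀ p : {v // v ∈ velocitySet d}, (π p : Fin d → ℤ) ≠ -(p : Fin d → ℤ)


theorem neg_mem_velocitySet {d : ℕ} {v : Fin d → ℤ} (h : v ∈ velocitySet d) :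
    -v ∈ velocitySet d := by
  simp only [velocitySet, Finset.mem_union, Finset.mem_image] at h ⊢
  rcases h with ⟨i, _, rfl⟩ | ⟨i, _, rfl⟩
  · exact Or.inr ⟨i, Finset.mem_univ i, rfl⟩
  · exact Or.inl ⟨i, Finset.mem_univ i, by simp⟩

theorem velocitySet_ne_neg {d : ℕ} {v : Fin d → ℤ} (h : v ∈ velocitySet d) : -v ≠ v := by
  simp only [velocitySet, Finset.mem_union, Finset.mem_image] at h
  rcases h with ⟨i, _, rfl⟩ | ⟨i, _, rfl⟩ <;> intro hv <;> have h2 := congrFun hv i <;>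
    simp [Pi.single_eq_same] at h2

theorem card_velocitySet (d : ℕ) : (velocitySet d).card = 2 * d := by
  have hinj : Function.Injective fun i : Fin d => Pi.single i (1 : ℤ) := by
    intro i j h
    by_contra hne
    have := congrFun h i
    simp [Pi.single_eq_same, Pi.single_eq_of_ne hne] at this
  have hinj2 : Function.Injective fun i : Fin d => -Pi.single i (1 : ℤ) := by
    intro i j h
    exact hinj (neg_injective (by simpa using h))
  have hdisj : Disjoint (Finset.univ.image fun i : Fin d => Pi.single i (1 : ℤ))
      (Finset.univ.image fun i : Fin d => -Pi.single i (1 : ℤ)) := by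
    rw [Finset.disjoint_left]
    rintro v hv hv'
    simp only [Finset.mem_image] at hv hv'
    obtain ⟨i, _, rfl⟩ := hv
    obtain ⟨j, _, hj⟩ := hv'
    have := congrFun hj i
    by_cases hij : i = j
    · subst hij; simp [Pi.single_eq_same] at this
    · simp [Pi.single_eq_of_ne hij] at this
  rw [velocitySet, Finset.card_union_of_disjoint hdisj,
    Finset.card_image_of_injective _ hinj, Finset.card_image_of_injective _ hinj2,
    Finset.card_univ, Fintype.card_fin]
  omega


section Bridge

variable {d : ℕ}

/-- Negation on the velocity set. -/
def negS (v : {v // v ∈ velocitySet d}) : {v // v ∈ velocitySet d} :=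
  ⟨-v.1, neg_mem_velocitySet v.2⟩

theorem negS_involutive : Function.Involutive (negS (d := d)) :=
  fun v => Subtype.ext (neg_neg v.1)

/-- Admissible mirrors correspond to fixed-point-free involutions via `f = -π`. -/
def mirrorEquiv :
    {π : {v // v ∈ velocitySet d} ≃ {v // v ∈ velocitySet d} // IsAdmissibleMirror π} ≃
      FPFun {v // v ∈ velocitySet d} where
  toFun π := by
    refine ⟨fun x => negS (π.1 x), ?_, ?_⟩
    · intro x
      have hq := π.2.1 x (negS (π.1 x)) rfl
      exact Subtype.ext (show -(π.1 (negS (π.1 x))).1 = x.1 by rw [hq, neg_neg])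
    · intro x h
      have h' : -(π.1 x).1 = x.1 := congrArg Subtype.val h
      exact π.2.2 x (neg_eq_iff_eq_neg.mp h')
  invFun f := by
    refine ⟨(Function.Involutive.toPerm f.1 f.2.1).trans
      (Function.Involutive.toPerm negS negS_involutive), ?_, ?_⟩
    · intro pp q hq
      have hq' : q = f.1 pp := Subtype.ext (by
        have : (q : Fin d → ℤ) = - -(f.1 pp).1 := hq
        rwa [neg_neg] at this)
      subst hq'
      show -(f.1 (f.1 pp)).1 = -pp.1
      rw [f.2.1 pp]
    · intro x h
      have h' : -(f.1 x).1 = -x.1 := h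
      exact f.2.2 x (Subtype.ext (neg_injective h'))
  left_inv π := by
    apply Subtype.ext
    apply Equiv.ext
    intro x
    exact negS_involutive (π.1 x)
  right_inv f := by
    apply Subtype.ext
    funext x
    exact negS_involutive (f.1 x)

/-- Pinned version. -/
def mirrorPinEquiv (p p' : {v // v ∈ velocitySet d}) :
    {π : {v // v ∈ velocitySet d} ≃ {v // v ∈ velocitySet d} //
        IsAdmissibleMirror π ∧ π p = p'} ≃
      {f : FPFun {v // v ∈ velocitySet d} // f.1 p = negS p'} :=
  ((Equiv.subtypeSubtypeEquivSubtypeInter _ _).symm).trans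
    (mirrorEquiv.subtypeEquiv (fun π => by
      constructor
      · intro h
        show negS (π.1.1 p) = negS p'
        show negS (π.1 p) = negS p'
        rw [h]
      · intro h
        exact negS_involutive.injective (show negS (π.1.1 p) = negS p' from h)))

end Bridge


/-- For fixed `p, p' ∈ 𝒫` with `p' ≠ -p`, the number of admissible mirrors with
`π(p) = p'` equals `(2d-3)!!` (with `(-1)!! = 1`), i.e. `(2d-1)!!/(2d-1)`; hence
under the uniform measure on admissible mirrors, the probability of the event
`{π(p) = p'}` is `1/(2d-1)` when `p' ≠ -p`, and `0` when `p' = -p`. -/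
theorem admissible_mirrors_single_value (d : ℕ) (hd : 1 ≤ d)
    (p p' : {v // v ∈ velocitySet d}) :
    ((p' : Fin d → ℤ) ≠ -(p : Fin d → ℤ) →
      Nat.card {π : {v // v ∈ velocitySet d} ≃ {v // v ∈ velocitySet d} //
          IsAdmissibleMirror π ∧ π p = p'} = Nat.doubleFactorial (2 * d - 3) ∧
      Nat.card {π : {v // v ∈ velocitySet d} ≃ {v // v ∈ velocitySet d} //
          IsAdmissibleMirror π ∧ π p = p'} =
        Nat.doubleFactorial (2 * d - 1) / (2 * d - 1) ∧
      (Nat.card {π : {v // v ∈ velocitySet d} ≃ {v // v ∈ velocitySet d} //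
          IsAdmissibleMirror π ∧ π p = p'} : ℚ) /
        (Nat.card {π : {v // v ∈ velocitySet d} ≃ {v // v ∈ velocitySet d} //
          IsAdmissibleMirror π} : ℚ) = 1 / (2 * (d : ℚ) - 1)) ∧
    ((p' : Fin d → ℤ) = -(p : Fin d → ℤ) →
      (Nat.card {π : {v // v ∈ velocitySet d} ≃ {v // v ∈ velocitySet d} //
          IsAdmissibleMirror π ∧ π p = p'} : ℚ) /
        (Nat.card {π : {v // v ∈ velocitySet d} ≃ {v // v ∈ velocitySet d} //
          IsAdmissibleMirror π} : ℚ) = 0) := by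
  have hcS : Fintype.card {v // v ∈ velocitySet d} = 2 * d := by
    rw [Fintype.card_coe, card_velocitySet]
  constructor
  · intro hne
    have hab : p ≠ negS p' := by
      intro h
      apply hne
      have h2 : (p : Fin d → ℤ) = -(p' : Fin d → ℤ) := congrArg Subtype.val h
      rw [h2, neg_neg]
    have hpin : Nat.card {π : {v // v ∈ velocitySet d} ≃ {v // v ∈ velocitySet d} //
        IsAdmissibleMirror π ∧ π p = p'} = Nat.doubleFactorial (2 * d - 3) := by
      rw [Nat.card_congr (mirrorPinEquiv p p')]
      exact card_FPFun_pinned d hd _ hcS p (negS p') hab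
    have htot : Nat.card {π : {v // v ∈ velocitySet d} ≃ {v // v ∈ velocitySet d} //
        IsAdmissibleMirror π} = Nat.doubleFactorial (2 * d - 1) := by
      rw [Nat.card_congr mirrorEquiv]
      exact card_FPFun d _ hcS
    have hfac : Nat.doubleFactorial (2 * d - 1) =
        (2 * d - 1) * Nat.doubleFactorial (2 * d - 3) := by
      rcases Nat.lt_or_ge d 2 with h2 | h2
      · interval_cases d <;> rfl
      · have h3 : 2 * d - 1 = (2 * d - 3) + 2 := by omega
        rw [h3, Nat.doubleFactorial_add_two]
    refine ⟨hpin, ?_, ?_⟩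
    · rw [hpin, hfac, Nat.mul_div_cancel_left _ (by omega : 0 < 2 * d - 1)]
    · rw [hpin, htot, hfac]
      have hX : (0 : ℚ) < (Nat.doubleFactorial (2 * d - 3) : ℚ) := by
        exact_mod_cast Nat.doubleFactorial_pos _
      have hcast : ((2 * d - 1 : ℕ) : ℚ) = 2 * (d : ℚ) - 1 := by
        have h1 : (1 : ℕ) ≤ 2 * d := by omega
        rw [Nat.cast_sub h1]
        push_cast
        ring
      rw [Nat.cast_mul, hcast, mul_comm (2 * (d : ℚ) - 1), div_mul_eq_div_div, div_self hX.ne']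
  · intro h
    haveI : IsEmpty {π : {v // v ∈ velocitySet d} ≃ {v // v ∈ velocitySet d} //
        IsAdmissibleMirror π ∧ π p = p'} :=
      ⟨fun x => x.2.1.2 p (by rw [x.2.2]; exact h)⟩
    rw [Nat.card_of_isEmpty]
    simp
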